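/- Let (R, +, ·) be a hyperring, e ∈ R, and Λₑ = λ^e_× ∪ α with transitive closure Λₑ*. Then Λₑ* is a strongly regular relation on both (R, +) and (R, ·), and the quotient R/Λₑ* is a commutative ring with identity Λₑ*(e). -/

import Mathlib

/-- A hyperoperation on `H`: every pair maps to a nonempty subset. -/
structure Hyperop (H : Type*) where
  op : H → H → Set H
  op_nonempty : ∀ x y, (op x y).Nonempty

namespace Hyperop

variable {H : Type*}

/-- Extension of the hyperoperation to subsets. -/
def sop (h : Hyperop H) (A B : Set H) : Set H := ⋃ a ∈ A, ⋃ b ∈ B, h.op a b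

/-- Associativity of a hyperoperation (on sets). -/
def IsAssoc (h : Hyperop H) : Prop :=
  ∀ x y z : H, h.sop (h.op x y) {z} = h.sop {x} (h.op y z)

/-- Reproduction axiom: `x ∘ H = H ∘ x = H`. -/
def IsReproductive (h : Hyperop H) : Prop :=
  ∀ x y : H, (∃ u, y ∈ h.op x u) ∧ (∃ v, y ∈ h.op v x)

/-- A relation `T` is strongly regular (on both sides) w.r.t. `h`. -/
def StronglyRegular (h : Hyperop H) (T : H → H → Prop) : Prop :=
  ∀ x y, T x y → ∀ a : H,
    (∀ u ∈ h.op a x, ∀ v ∈ h.op a y, T u v) ∧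
    (∀ u ∈ h.op x a, ∀ v ∈ h.op y a, T u v)

/-- `h.foldl x l` : the set `x ∘ l₁ ∘ ⋯ ∘ lₖ`. -/
def foldl (h : Hyperop H) : H → List H → Set H
  | x, [] => {x}
  | x, y :: l => ⋃ z ∈ h.op x y, h.foldl z l

/-- Hyper-"product" of a nonempty list of elements (empty list gives `∅`). -/
def listProd (h : Hyperop H) : List H → Set H
  | [] => ∅
  | x :: l => h.foldl x l

/-- Fold a list of subsets onto a subset. -/
def setFold (h : Hyperop H) : Set H → List (Set H) → Set H
  | A, [] => A
  | A, B :: l => h.setFold (h.sop A B) l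

end Hyperop

/-- `l'` is obtained from `l` by inserting one consecutive block of copies of `e`
(or is equal to `l`). -/
def InsertBlock {α : Type*} (e : α) (l l' : List α) : Prop :=
  l' = l ∨ ∃ (p q : List α) (k : ℕ), 1 ≤ k ∧ l = p ++ q ∧ l' = p ++ List.replicate k e ++ q

/-- A hyperring: `(R, +)` a hypergroup, `(R, ·)` a semi-hypergroup,
with two-sided distributivity. -/
structure Hyperring (R : Type*) where
  add : Hyperop R
  mul : Hyperop R
  add_assoc : add.IsAssoc
  add_repro : add.IsReproductive
  mul_assoc : mul.IsAssoc
  left_distrib : ∀ x y z : R, mul.sop {x} (add.op y z) = add.sop (mul.op x y) (mul.op x z)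
  right_distrib : ∀ x y z : R, mul.sop (add.op y z) {x} = add.sop (mul.op y x) (mul.op z x)

namespace Hyperring

variable {R : Type*}

/-- Sum of products: `ll` is a list of lists; each inner list is multiplied,
the results are added up. -/
def SOP (S : Hyperring R) : List (List R) → Set R
  | [] => ∅
  | l :: t => S.add.setFold (S.mul.listProd l) (t.map S.mul.listProd)

/-- A valid sum-of-products expression: nonempty list of nonempty lists. -/
def ValidExpr (S : Hyperring R) (ll : List (List R)) : Prop :=
  ll ≠ [] ∧ ∀ l ∈ ll, l ≠ []

/-- The Vougiouklis relation `Γ`. -/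
def gamma (S : Hyperring R) (x y : R) : Prop :=
  ∃ ll, S.ValidExpr ll ∧ x ∈ S.SOP ll ∧ y ∈ S.SOP ll

/-- The relation `α₊` : permuting the summands. -/
def alphaPlus (S : Hyperring R) (x y : R) : Prop :=
  ∃ ll ll', S.ValidExpr ll ∧ ll.Perm ll' ∧ x ∈ S.SOP ll ∧ y ∈ S.SOP ll'

/-- The relation `α×` : permuting the factors inside each product. -/
def alphaTimes (S : Hyperring R) (x y : R) : Prop :=
  ∃ ll ll', S.ValidExpr ll ∧ List.Forall₂ List.Perm ll ll' ∧ x ∈ S.SOP ll ∧ y ∈ S.SOP ll'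

/-- The Davvaz–Vougiouklis relation `α` : permuting factors inside each
product and then permuting the summands. -/
def alpha (S : Hyperring R) (x y : R) : Prop :=
  ∃ ll mid ll', S.ValidExpr ll ∧ List.Forall₂ List.Perm ll mid ∧ mid.Perm ll' ∧
    x ∈ S.SOP ll ∧ y ∈ S.SOP ll'

/-- Condition `𝔓ₑ` : each product of the second expression is obtained from the
corresponding product of the first by inserting a block of copies of `e`. -/
def CondP (S : Hyperring R) (e : R) (ll ll' : List (List R)) : Prop :=
  List.Forall₂ (InsertBlock e) ll ll'

/-- The relation `(λ^e_×)ₘ`. -/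
def lamTimesN (S : Hyperring R) (e : R) (m : ℕ) (x y : R) : Prop :=
  ∃ ll ll', ll.length = m ∧ S.ValidExpr ll ∧ S.CondP e ll ll' ∧
    ((x ∈ S.SOP ll ∧ y ∈ S.SOP ll') ∨ (x ∈ S.SOP ll' ∧ y ∈ S.SOP ll))

/-- The relation `λ^e_×`. -/
def lamTimes (S : Hyperring R) (e : R) (x y : R) : Prop :=
  ∃ m, 1 ≤ m ∧ S.lamTimesN e m x y

/-- The relation `λₑ = λ^e_× ∪ α₊`. -/
def lam (S : Hyperring R) (e : R) (x y : R) : Prop :=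
  S.lamTimes e x y ∨ S.alphaPlus x y

/-- The relation `Λₑ = λ^e_× ∪ α`. -/
def Lam (S : Hyperring R) (e : R) (x y : R) : Prop :=
  S.lamTimes e x y ∨ S.alpha x y

/-- `M` is a `λₑ`-part. -/
def IsLamPart (S : Hyperring R) (e : R) (M : Set R) : Prop :=
  (∀ ll ll', S.ValidExpr ll → ll.Perm ll' → (S.SOP ll ∩ M).Nonempty → S.SOP ll' ⊆ M) ∧
  (∀ ll ll', S.ValidExpr ll → (S.CondP e ll ll' ∨ S.CondP e ll' ll) →
      (S.SOP ll ∩ M).Nonempty → S.SOP ll' ⊆ M)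

/-- A `λₑ`-strong hyperring. -/
def LamStrong (S : Hyperring R) (e : R) : Prop :=
  (∀ x y, Relation.TransGen (S.lam e) x y →
      (S.mul.op x e ∩ S.mul.op y e).Nonempty ∧ (S.mul.op e x ∩ S.mul.op e y).Nonempty) ∧
  (∀ x z, z ∈ S.mul.op x e → x ∈ S.mul.op z e) ∧
  (∀ x z, z ∈ S.mul.op e x → x ∈ S.mul.op e z)

end Hyperring

/-- The setoid given by the transitive (= equivalence) closure of `Λₑ`. -/
def LamSetoid {R : Type*} (S : Hyperring R) (e : R) : Setoid R :=
  ⟨Relation.EqvGen (S.Lam e), Relation.EqvGen.is_equivalence _⟩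

namespace Hyperop

variable {H : Type*} (h : Hyperop H)

theorem mem_sop {A B : Set H} {z : H} :
    z ∈ h.sop A B ↔ ∃ a ∈ A, ∃ b ∈ B, z ∈ h.op a b := by
  simp [Hyperop.sop]

theorem sop_singleton (x y : H) : h.sop {x} {y} = h.op x y := by
  ext z; simp [mem_sop]

theorem sop_biUnion_left {ι : Type*} (s : Set ι) (f : ι → Set H) (B : Set H) :
    h.sop (⋃ i ∈ s, f i) B = ⋃ i ∈ s, h.sop (f i) B := by
  ext z
  simp only [mem_sop, Set.mem_iUnion]
  constructor
  · rintro ⟨a, ⟨i, hi, ha⟩, b, hb, hz⟩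
    exact ⟨i, hi, a, ha, b, hb, hz⟩
  · rintro ⟨i, hi, a, ha, b, hb, hz⟩
    exact ⟨a, ⟨i, hi, ha⟩, b, hb, hz⟩

theorem sop_assoc (ha : h.IsAssoc) (A B C : Set H) :
    h.sop (h.sop A B) C = h.sop A (h.sop B C) := by
  ext z
  simp only [mem_sop]
  constructor
  · rintro ⟨u, ⟨a, haA, b, hb, hu⟩, c, hc, hz⟩
    have h1 : z ∈ h.sop (h.op a b) {c} := h.mem_sop.mpr ⟨u, hu, c, rfl, hz⟩
    rw [ha a b c] at h1
    obtain ⟨a', ha', w, hw, hz'⟩ := h.mem_sop.mp h1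
    obtain rfl : a' = a := ha'
    exact ⟨a', haA, w, ⟨b, hb, c, hc, hw⟩, hz'⟩
  · rintro ⟨a, haA, w, ⟨b, hb, c, hc, hw⟩, hz⟩
    have h1 : z ∈ h.sop {a} (h.op b c) := h.mem_sop.mpr ⟨a, rfl, w, hw, hz⟩
    rw [← ha a b c] at h1
    obtain ⟨u, hu, c', hc', hz'⟩ := h.mem_sop.mp h1
    obtain rfl : c' = c := hc'
    exact ⟨u, ⟨a, haA, b, hb, hu⟩, c', hc, hz'⟩

theorem setFold_append_single (A : Set H) (l : List (Set H)) (B : Set H) :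
    h.setFold A (l ++ [B]) = h.sop (h.setFold A l) B := by
  induction l generalizing A with
  | nil => rfl
  | cons C l ih => exact ih (h.sop A C)

theorem sop_setFold (ha : h.IsAssoc) (A B : Set H) (l : List (Set H)) :
    h.setFold (h.sop A B) l = h.sop A (h.setFold B l) := by
  induction l generalizing B with
  | nil => rfl
  | cons C l ih =>
    show h.setFold (h.sop (h.sop A B) C) l = _
    rw [h.sop_assoc ha, ih]
    rfl

theorem foldl_append_single (x : H) (l : List H) (a : H) :
    h.foldl x (l ++ [a]) = h.sop (h.foldl x l) {a} := by
  induction l generalizing x with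
  | nil =>
    show h.foldl x [a] = h.sop {x} {a}
    rw [sop_singleton]
    ext z
    simp [Hyperop.foldl]
  | cons b l ih =>
    show (⋃ z ∈ h.op x b, h.foldl z (l ++ [a])) = h.sop (⋃ z ∈ h.op x b, h.foldl z l) {a}
    rw [h.sop_biUnion_left]
    exact Set.iUnion₂_congr fun z _ => ih z

theorem listProd_append_single {l : List H} (hl : l ≠ []) (a : H) :
    h.listProd (l ++ [a]) = h.sop (h.listProd l) {a} := by
  cases l with
  | nil => exact absurd rfl hl
  | cons b t => exact h.foldl_append_single b t a

theorem listProd_cons (ha : h.IsAssoc) (x : H) {l : List H} (hl : l ≠ []) :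
    h.listProd (x :: l) = h.sop {x} (h.listProd l) := by
  induction l using List.reverseRecOn with
  | nil => exact absurd rfl hl
  | append_singleton t c ih =>
    cases t with
    | nil =>
      show h.foldl x [c] = h.sop {x} (h.foldl c [])
      ext z
      simp [Hyperop.foldl, mem_sop]
    | cons b t =>
      have htne : (b :: t : List H) ≠ [] := by simp
      calc h.listProd (x :: ((b :: t) ++ [c]))
          = h.listProd ((x :: (b :: t)) ++ [c]) := rfl
        _ = h.sop (h.listProd (x :: (b :: t))) {c} := h.listProd_append_single (by simp) c
        _ = h.sop (h.sop {x} (h.listProd (b :: t))) {c} := by rw [ih htne]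
        _ = h.sop {x} (h.sop (h.listProd (b :: t)) {c}) := h.sop_assoc ha _ _ _
        _ = h.sop {x} (h.listProd ((b :: t) ++ [c])) := by
            rw [h.listProd_append_single htne c]

end Hyperop

namespace Hyperring

variable {R : Type*} (S : Hyperring R)

theorem SOP_singleton (x : R) : S.SOP [[x]] = {x} := rfl

theorem SOP_pair_add (x y : R) : S.SOP [[x], [y]] = S.add.op x y := by
  show S.add.sop {x} {y} = _
  exact S.add.sop_singleton x y

theorem SOP_pair_mul (x y : R) : S.SOP [[x, y]] = S.mul.op x y := by
  show S.mul.foldl x [y] = _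
  ext z
  simp [Hyperop.foldl]

theorem sop_SOP_add_left {ll : List (List R)} (hll : ll ≠ []) (x : R) :
    S.add.sop {x} (S.SOP ll) = S.SOP ([x] :: ll) := by
  cases ll with
  | nil => exact absurd rfl hll
  | cons l t =>
    show S.add.sop {x} (S.add.setFold (S.mul.listProd l) (t.map S.mul.listProd)) =
      S.add.setFold {x} (S.mul.listProd l :: t.map S.mul.listProd)
    rw [← S.add.sop_setFold S.add_assoc]
    rfl

theorem sop_SOP_add_right {ll : List (List R)} (hll : ll ≠ []) (x : R) :
    S.add.sop (S.SOP ll) {x} = S.SOP (ll ++ [[x]]) := by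
  cases ll with
  | nil => exact absurd rfl hll
  | cons l t =>
    show _ = S.add.setFold (S.mul.listProd l) ((t ++ [[x]]).map S.mul.listProd)
    rw [List.map_append]
    show _ = S.add.setFold _ (List.map S.mul.listProd t ++ [S.mul.listProd [x]])
    rw [S.add.setFold_append_single]
    rfl

theorem msop_add_sop_left (x : R) (B C : Set R) :
    S.mul.sop {x} (S.add.sop B C) = S.add.sop (S.mul.sop {x} B) (S.mul.sop {x} C) := by
  ext z
  simp only [Hyperop.mem_sop, Set.mem_singleton_iff]
  constructor
  · rintro ⟨x', rfl, w, ⟨b, hb, c, hc, hw⟩, hz⟩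
    have h1 : z ∈ S.mul.sop {x'} (S.add.op b c) := S.mul.mem_sop.mpr ⟨x', rfl, w, hw, hz⟩
    rw [S.left_distrib] at h1
    obtain ⟨p, hp, q, hq, hz'⟩ := S.add.mem_sop.mp h1
    exact ⟨p, ⟨x', rfl, b, hb, hp⟩, q, ⟨x', rfl, c, hc, hq⟩, hz'⟩
  · rintro ⟨p, ⟨x', rfl, b, hb, hp⟩, q, ⟨x'', hx'', c, hc, hq⟩, hz⟩
    obtain rfl : x'' = x' := hx''
    have h1 : z ∈ S.add.sop (S.mul.op x'' b) (S.mul.op x'' c) :=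
      S.add.mem_sop.mpr ⟨p, hp, q, hq, hz⟩
    rw [← S.left_distrib] at h1
    obtain ⟨x3, hx3, w, hw, hz'⟩ := S.mul.mem_sop.mp h1
    obtain rfl : x3 = x'' := hx3
    exact ⟨x3, rfl, w, ⟨b, hb, c, hc, hw⟩, hz'⟩

theorem msop_add_sop_right (x : R) (B C : Set R) :
    S.mul.sop (S.add.sop B C) {x} = S.add.sop (S.mul.sop B {x}) (S.mul.sop C {x}) := by
  ext z
  simp only [Hyperop.mem_sop, Set.mem_singleton_iff]
  constructor
  · rintro ⟨w, ⟨b, hb, c, hc, hw⟩, x', rfl, hz⟩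
    have h1 : z ∈ S.mul.sop (S.add.op b c) {x'} := S.mul.mem_sop.mpr ⟨w, hw, x', rfl, hz⟩
    rw [S.right_distrib] at h1
    obtain ⟨p, hp, q, hq, hz'⟩ := S.add.mem_sop.mp h1
    exact ⟨p, ⟨b, hb, x', rfl, hp⟩, q, ⟨c, hc, x', rfl, hq⟩, hz'⟩
  · rintro ⟨p, ⟨b, hb, x', rfl, hp⟩, q, ⟨c, hc, x'', hx'', hq⟩, hz⟩
    obtain rfl : x'' = x' := hx''
    have h1 : z ∈ S.add.sop (S.mul.op b x'') (S.mul.op c x'') :=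
      S.add.mem_sop.mpr ⟨p, hp, q, hq, hz⟩
    rw [← S.right_distrib] at h1
    obtain ⟨w, hw, x3, hx3, hz'⟩ := S.mul.mem_sop.mp h1
    obtain rfl : x3 = x'' := hx3
    exact ⟨w, ⟨b, hb, c, hc, hw⟩, x3, rfl, hz'⟩

theorem msop_setFold_left (x : R) (A : Set R) (Bs : List (Set R)) :
    S.mul.sop {x} (S.add.setFold A Bs) =
      S.add.setFold (S.mul.sop {x} A) (Bs.map (fun B => S.mul.sop {x} B)) := by
  induction Bs generalizing A with
  | nil => rfl
  | cons B Bs ih =>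
    show S.mul.sop {x} (S.add.setFold (S.add.sop A B) Bs) = _
    rw [ih, S.msop_add_sop_left]
    rfl

theorem msop_setFold_right (x : R) (A : Set R) (Bs : List (Set R)) :
    S.mul.sop (S.add.setFold A Bs) {x} =
      S.add.setFold (S.mul.sop A {x}) (Bs.map (fun B => S.mul.sop B {x})) := by
  induction Bs generalizing A with
  | nil => rfl
  | cons B Bs ih =>
    show S.mul.sop (S.add.setFold (S.add.sop A B) Bs) {x} = _
    rw [ih, S.msop_add_sop_right]
    rfl

theorem msop_SOP_left (x : R) {ll : List (List R)} (hv : S.ValidExpr ll) :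
    S.mul.sop {x} (S.SOP ll) = S.SOP (ll.map (fun l => x :: l)) := by
  obtain ⟨hne, hall⟩ := hv
  cases ll with
  | nil => exact absurd rfl hne
  | cons l t =>
    show S.mul.sop {x} (S.add.setFold (S.mul.listProd l) (t.map S.mul.listProd)) =
      S.add.setFold (S.mul.listProd (x :: l)) ((t.map (fun l => x :: l)).map S.mul.listProd)
    rw [S.msop_setFold_left, S.mul.listProd_cons S.mul_assoc x (hall l (by simp)),
      List.map_map, List.map_map]
    exact congrArg (S.add.setFold _) (List.map_congr_left fun l' hl' =>
      (S.mul.listProd_cons S.mul_assoc x (hall l' (by simp [hl']))).symm)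

theorem msop_SOP_right (x : R) {ll : List (List R)} (hv : S.ValidExpr ll) :
    S.mul.sop (S.SOP ll) {x} = S.SOP (ll.map (fun l => l ++ [x])) := by
  obtain ⟨hne, hall⟩ := hv
  cases ll with
  | nil => exact absurd rfl hne
  | cons l t =>
    show S.mul.sop (S.add.setFold (S.mul.listProd l) (t.map S.mul.listProd)) {x} =
      S.add.setFold (S.mul.listProd (l ++ [x])) ((t.map (fun l => l ++ [x])).map S.mul.listProd)
    rw [S.msop_setFold_right, S.mul.listProd_append_single (hall l (by simp)) x,
      List.map_map, List.map_map]
    exact congrArg (S.add.setFold _) (List.map_congr_left fun l' hl' =>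
      (S.mul.listProd_append_single (hall l' (by simp [hl'])) x).symm)

end Hyperring

theorem InsertBlock.ne_nil {α : Type*} {e : α} {l l' : List α} (h : InsertBlock e l l')
    (hl : l ≠ []) : l' ≠ [] := by
  rcases h with rfl | ⟨p, q, k, hk, rfl, rfl⟩
  · exact hl
  · simp
    intro hp
    omega

theorem InsertBlock.cons {α : Type*} {e a : α} {l l' : List α} (h : InsertBlock e l l') :
    InsertBlock e (a :: l) (a :: l') := by
  rcases h with rfl | ⟨p, q, k, hk, rfl, rfl⟩
  · exact Or.inl rfl
  · exact Or.inr ⟨a :: p, q, k, hk, rfl, rfl⟩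

theorem InsertBlock.append_single {α : Type*} {e a : α} {l l' : List α}
    (h : InsertBlock e l l') : InsertBlock e (l ++ [a]) (l' ++ [a]) := by
  rcases h with rfl | ⟨p, q, k, hk, rfl, rfl⟩
  · exact Or.inl rfl
  · exact Or.inr ⟨p, q ++ [a], k, hk, by simp, by simp⟩

theorem forall₂_map_map {α β : Type*} {r : α → α → Prop} {s : β → β → Prop} {f : α → β}
    (hf : ∀ a b, r a b → s (f a) (f b)) :
    ∀ {l1 l2 : List α}, List.Forall₂ r l1 l2 → List.Forall₂ s (l1.map f) (l2.map f) := by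
  intro l1 l2 h
  induction h with
  | nil => exact List.Forall₂.nil
  | cons h _ ih => exact List.Forall₂.cons (hf _ _ h) ih

theorem forall₂_perm_refl {α : Type*} : ∀ l : List (List α), List.Forall₂ List.Perm l l := by
  intro l
  induction l with
  | nil => exact List.Forall₂.nil
  | cons a l ih => exact List.Forall₂.cons (List.Perm.refl a) ih

theorem forall₂_mem_right {α β : Type*} {r : α → β → Prop} :
    ∀ {l1 : List α} {l2 : List β}, List.Forall₂ r l1 l2 → ∀ b ∈ l2, ∃ a ∈ l1, r a b := by
  intro l1 l2 h
  induction h with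
  | nil => intro b hb; exact absurd hb List.not_mem_nil
  | cons h _ ih =>
    intro b hb
    rcases List.mem_cons.mp hb with rfl | hb
    · exact ⟨_, List.mem_cons_self, h⟩
    · obtain ⟨a, ha, hr⟩ := ih b hb
      exact ⟨a, List.mem_cons_of_mem _ ha, hr⟩

namespace Hyperring

variable {R : Type*} (S : Hyperring R)

theorem valid_of_forall₂_perm {ll mid : List (List R)} (hv : S.ValidExpr ll)
    (h : List.Forall₂ List.Perm ll mid) : S.ValidExpr mid := by
  obtain ⟨hne, hall⟩ := hv
  constructor
  · intro hmid
    subst hmid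
    exact hne (List.forall₂_nil_right_iff.mp h)
  · intro l' hl'
    obtain ⟨l, hl, hperm⟩ := forall₂_mem_right h l' hl'
    intro hnil
    exact hall l hl (hnil ▸ hperm).eq_nil

theorem valid_of_perm {ll ll' : List (List R)} (hv : S.ValidExpr ll)
    (h : ll.Perm ll') : S.ValidExpr ll' := by
  obtain ⟨hne, hall⟩ := hv
  exact ⟨fun h' => hne (h' ▸ h).eq_nil, fun l hl => hall l (h.mem_iff.mpr hl)⟩

theorem valid_of_condP {e : R} {ll ll' : List (List R)} (hv : S.ValidExpr ll)
    (h : S.CondP e ll ll') : S.ValidExpr ll' := by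
  obtain ⟨hne, hall⟩ := hv
  constructor
  · intro hll'
    subst hll'
    exact hne (List.forall₂_nil_right_iff.mp h)
  · intro l' hl'
    obtain ⟨l, hl, hib⟩ := forall₂_mem_right h l' hl'
    exact hib.ne_nil (hall l hl)

theorem alpha_of_mem {ll : List (List R)} (hv : S.ValidExpr ll) {x y : R}
    (hx : x ∈ S.SOP ll) (hy : y ∈ S.SOP ll) : S.alpha x y :=
  ⟨ll, ll, ll, hv, forall₂_perm_refl ll, List.Perm.refl ll, hx, hy⟩

/-- Lifting a `Lam` step through a compatible expression transformation. -/
theorem Lam.lift {S : Hyperring R} {e : R} {x y : R}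
    (hxy : S.Lam e x y) (f : List (List R) → List (List R)) (g : R → Set R)
    (hg : ∀ ll, S.ValidExpr ll → ∀ z ∈ S.SOP ll, ∀ u ∈ g z, u ∈ S.SOP (f ll))
    (hv : ∀ ll, S.ValidExpr ll → S.ValidExpr (f ll))
    (hc : ∀ ll ll', S.CondP e ll ll' → S.CondP e (f ll) (f ll'))
    (hp2 : ∀ ll ll', List.Forall₂ List.Perm ll ll' → List.Forall₂ List.Perm (f ll) (f ll'))
    (hp : ∀ ll ll', ll.Perm ll' → (f ll).Perm (f ll')) :
    ∀ u ∈ g x, ∀ v ∈ g y, S.Lam e u v := by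
  intro u hu v hv'
  rcases hxy with ⟨m, hm, ll, ll', hlen, hval, hcond, hcase⟩ | ⟨ll, mid, ll', hval, hf, hperm, hx, hy⟩
  · have hval' : S.ValidExpr ll' := S.valid_of_condP hval hcond
    refine Or.inl ⟨(f ll).length, ?_, f ll, f ll', rfl, hv ll hval, hc ll ll' hcond, ?_⟩
    · have : f ll ≠ [] := (hv ll hval).1
      exact List.length_pos_iff.mpr this
    · rcases hcase with ⟨hx, hy⟩ | ⟨hx, hy⟩
      · exact Or.inl ⟨hg ll hval x hx u hu, hg ll' hval' y hy v hv'⟩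
      · exact Or.inr ⟨hg ll' hval' x hx u hu, hg ll hval y hy v hv'⟩
  · have hvm : S.ValidExpr mid := S.valid_of_forall₂_perm hval hf
    have hvll' : S.ValidExpr ll' := S.valid_of_perm hvm hperm
    exact Or.inr ⟨f ll, f mid, f ll', hv ll hval, hp2 ll mid hf, hp mid ll' hperm,
      hg ll hval x hx u hu, hg ll' hvll' y hy v hv'⟩

theorem Lam.compat {S : Hyperring R} {e : R} {x y : R} (hxy : S.Lam e x y) (a : R) :
    (∀ u ∈ S.add.op a x, ∀ v ∈ S.add.op a y, S.Lam e u v) ∧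
    (∀ u ∈ S.add.op x a, ∀ v ∈ S.add.op y a, S.Lam e u v) ∧
    (∀ u ∈ S.mul.op a x, ∀ v ∈ S.mul.op a y, S.Lam e u v) ∧
    (∀ u ∈ S.mul.op x a, ∀ v ∈ S.mul.op y a, S.Lam e u v) := by
  refine ⟨?_, ?_, ?_, ?_⟩
  · refine hxy.lift (fun ll => [a] :: ll) (fun z => S.add.op a z) ?_ ?_ ?_ ?_ ?_
    · intro ll hvll z hz u hu
      rw [← S.sop_SOP_add_left hvll.1 a]
      exact S.add.mem_sop.mpr ⟨a, rfl, z, hz, hu⟩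
    · refine fun ll hvll => ⟨by simp, fun l hl => ?_⟩
      rcases List.mem_cons.mp hl with rfl | hl
      · simp
      · exact hvll.2 l hl
    · exact fun ll ll' h => List.Forall₂.cons (Or.inl rfl) h
    · exact fun ll ll' h => List.Forall₂.cons (List.Perm.refl _) h
    · exact fun ll ll' h => h.cons [a]
  · refine hxy.lift (fun ll => ll ++ [[a]]) (fun z => S.add.op z a) ?_ ?_ ?_ ?_ ?_
    · intro ll hvll z hz u hu
      rw [← S.sop_SOP_add_right hvll.1 a]
      exact S.add.mem_sop.mpr ⟨z, hz, a, rfl, hu⟩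
    · refine fun ll hvll => ⟨by simp, fun l hl => ?_⟩
      rcases List.mem_append.mp hl with hl | hl
      · exact hvll.2 l hl
      · simp only [List.mem_singleton] at hl
        subst hl; simp
    · exact fun ll ll' h => List.rel_append h (List.Forall₂.cons (Or.inl rfl) List.Forall₂.nil)
    · exact fun ll ll' h => List.rel_append h (List.Forall₂.cons (List.Perm.refl _) List.Forall₂.nil)
    · exact fun ll ll' h => h.append_right [[a]]
  · refine hxy.lift (fun ll => ll.map (fun l => a :: l)) (fun z => S.mul.op a z) ?_ ?_ ?_ ?_ ?_
    · intro ll hvll z hz u hu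
      rw [← S.msop_SOP_left a hvll]
      exact S.mul.mem_sop.mpr ⟨a, rfl, z, hz, hu⟩
    · refine fun ll hvll => ⟨by simpa using hvll.1, fun l hl => ?_⟩
      simp only [List.mem_map] at hl
      obtain ⟨l', _, rfl⟩ := hl
      simp
    · exact fun ll ll' h =>
        forall₂_map_map (fun (l1 l2 : List R) (hab : InsertBlock e l1 l2) => hab.cons) h
    · exact fun ll ll' h =>
        forall₂_map_map (fun (l1 l2 : List R) (hab : l1.Perm l2) => hab.cons a) h
    · exact fun ll ll' h => h.map _
  · refine hxy.lift (fun ll => ll.map (fun l => l ++ [a])) (fun z => S.mul.op z a) ?_ ?_ ?_ ?_ ?_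
    · intro ll hvll z hz u hu
      rw [← S.msop_SOP_right a hvll]
      exact S.mul.mem_sop.mpr ⟨z, hz, a, rfl, hu⟩
    · refine fun ll hvll => ⟨by simpa using hvll.1, fun l hl => ?_⟩
      simp only [List.mem_map] at hl
      obtain ⟨l', _, rfl⟩ := hl
      simp
    · exact fun ll ll' h =>
        forall₂_map_map (fun (l1 l2 : List R) (hab : InsertBlock e l1 l2) => hab.append_single) h
    · exact fun ll ll' h =>
        forall₂_map_map (fun (l1 l2 : List R) (hab : l1.Perm l2) => hab.append_right [a]) h
    · exact fun ll ll' h => h.map _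

/-- All elements of a single hyperproduct are `Λₑ`-related. -/
theorem lam_of_mem_add {e x y u v : R} (hu : u ∈ S.add.op x y) (hv : v ∈ S.add.op x y) :
    S.Lam e u v := by
  refine Or.inr (S.alpha_of_mem (ll := [[x], [y]]) ⟨by simp, fun l hl => ?_⟩ ?_ ?_)
  · rcases List.mem_cons.mp hl with rfl | hl
    · simp
    · rcases List.mem_cons.mp hl with rfl | hl
      · simp
      · exact absurd hl List.not_mem_nil
  · rw [S.SOP_pair_add]; exact hu
  · rw [S.SOP_pair_add]; exact hv

theorem lam_of_mem_mul {e x y u v : R} (hu : u ∈ S.mul.op x y) (hv : v ∈ S.mul.op x y) :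
    S.Lam e u v := by
  refine Or.inr (S.alpha_of_mem (ll := [[x, y]]) ⟨by simp, fun l hl => ?_⟩ ?_ ?_)
  · rcases List.mem_cons.mp hl with rfl | hl
    · simp
    · exact absurd hl List.not_mem_nil
  · rw [S.SOP_pair_mul]; exact hu
  · rw [S.SOP_pair_mul]; exact hv

theorem eqvGen_compat (e : R) : ∀ x y, Relation.EqvGen (S.Lam e) x y → ∀ a : R,
    (∀ u ∈ S.add.op a x, ∀ v ∈ S.add.op a y, Relation.EqvGen (S.Lam e) u v) ∧
    (∀ u ∈ S.add.op x a, ∀ v ∈ S.add.op y a, Relation.EqvGen (S.Lam e) u v) ∧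
    (∀ u ∈ S.mul.op a x, ∀ v ∈ S.mul.op a y, Relation.EqvGen (S.Lam e) u v) ∧
    (∀ u ∈ S.mul.op x a, ∀ v ∈ S.mul.op y a, Relation.EqvGen (S.Lam e) u v) := by
  intro x y h
  induction h with
  | rel x y hxy =>
    intro a
    obtain ⟨h1, h2, h3, h4⟩ := hxy.compat a
    exact ⟨fun u hu v hv => Relation.EqvGen.rel _ _ (h1 u hu v hv),
      fun u hu v hv => Relation.EqvGen.rel _ _ (h2 u hu v hv),
      fun u hu v hv => Relation.EqvGen.rel _ _ (h3 u hu v hv),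
      fun u hu v hv => Relation.EqvGen.rel _ _ (h4 u hu v hv)⟩
  | refl x =>
    intro a
    exact ⟨fun u hu v hv => Relation.EqvGen.rel _ _ (S.lam_of_mem_add hu hv),
      fun u hu v hv => Relation.EqvGen.rel _ _ (S.lam_of_mem_add hu hv),
      fun u hu v hv => Relation.EqvGen.rel _ _ (S.lam_of_mem_mul hu hv),
      fun u hu v hv => Relation.EqvGen.rel _ _ (S.lam_of_mem_mul hu hv)⟩
  | symm x y _ ih =>
    intro a
    obtain ⟨h1, h2, h3, h4⟩ := ih a
    exact ⟨fun u hu v hv => (h1 v hv u hu).symm, fun u hu v hv => (h2 v hv u hu).symm,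
      fun u hu v hv => (h3 v hv u hu).symm, fun u hu v hv => (h4 v hv u hu).symm⟩
  | trans x y z _ _ ih1 ih2 =>
    intro a
    obtain ⟨h1, h2, h3, h4⟩ := ih1 a
    obtain ⟨k1, k2, k3, k4⟩ := ih2 a
    refine ⟨fun u hu v hv => ?_, fun u hu v hv => ?_, fun u hu v hv => ?_, fun u hu v hv => ?_⟩
    · obtain ⟨w, hw⟩ := S.add.op_nonempty a y
      exact (h1 u hu w hw).trans _ _ _ (k1 w hw v hv)
    · obtain ⟨w, hw⟩ := S.add.op_nonempty y a
      exact (h2 u hu w hw).trans _ _ _ (k2 w hw v hv)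
    · obtain ⟨w, hw⟩ := S.mul.op_nonempty a y
      exact (h3 u hu w hw).trans _ _ _ (k3 w hw v hv)
    · obtain ⟨w, hw⟩ := S.mul.op_nonempty y a
      exact (h4 u hu w hw).trans _ _ _ (k4 w hw v hv)

end Hyperring

namespace Hyperring

variable {R : Type*} (S : Hyperring R)

/-- Any two elements of `x + y` are `Λₑ*`-related. -/
theorem T_add {e x y u v : R} (hu : u ∈ S.add.op x y) (hv : v ∈ S.add.op x y) :
    Relation.EqvGen (S.Lam e) u v :=
  Relation.EqvGen.rel _ _ (S.lam_of_mem_add hu hv)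

theorem T_mul {e x y u v : R} (hu : u ∈ S.mul.op x y) (hv : v ∈ S.mul.op x y) :
    Relation.EqvGen (S.Lam e) u v :=
  Relation.EqvGen.rel _ _ (S.lam_of_mem_mul hu hv)

theorem T_add_comm {e x y u v : R} (hu : u ∈ S.add.op x y) (hv : v ∈ S.add.op y x) :
    Relation.EqvGen (S.Lam e) u v := by
  refine Relation.EqvGen.rel _ _ (Or.inr ⟨[[x], [y]], [[x], [y]], [[y], [x]],
    ⟨by simp, fun l hl => ?_⟩, forall₂_perm_refl _, List.Perm.swap [y] [x] [], ?_, ?_⟩)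
  · rcases List.mem_cons.mp hl with rfl | hl
    · simp
    · rcases List.mem_cons.mp hl with rfl | hl
      · simp
      · exact absurd hl List.not_mem_nil
  · rw [S.SOP_pair_add]; exact hu
  · rw [S.SOP_pair_add]; exact hv

theorem T_mul_comm {e x y u v : R} (hu : u ∈ S.mul.op x y) (hv : v ∈ S.mul.op y x) :
    Relation.EqvGen (S.Lam e) u v := by
  refine Relation.EqvGen.rel _ _ (Or.inr ⟨[[x, y]], [[y, x]], [[y, x]],
    ⟨by simp, fun l hl => ?_⟩, List.Forall₂.cons (List.Perm.swap y x []) List.Forall₂.nil,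
    List.Perm.refl _, ?_, ?_⟩)
  · rcases List.mem_cons.mp hl with rfl | hl
    · simp
    · exact absurd hl List.not_mem_nil
  · rw [S.SOP_pair_mul]; exact hu
  · rw [S.SOP_pair_mul]; exact hv

theorem T_one_left {e x u : R} (hu : u ∈ S.mul.op e x) :
    Relation.EqvGen (S.Lam e) x u := by
  refine Relation.EqvGen.rel _ _ (Or.inl ⟨1, le_refl 1, [[x]], [[e, x]], rfl,
    ⟨by simp, fun l hl => ?_⟩,
    List.Forall₂.cons (Or.inr ⟨[], [x], 1, le_refl 1, by simp, by simp⟩) List.Forall₂.nil,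
    Or.inl ⟨?_, ?_⟩⟩)
  · rcases List.mem_cons.mp hl with rfl | hl
    · simp
    · exact absurd hl List.not_mem_nil
  · rw [S.SOP_singleton]; exact rfl
  · rw [S.SOP_pair_mul]; exact hu

theorem T_one_right {e x u : R} (hu : u ∈ S.mul.op x e) :
    Relation.EqvGen (S.Lam e) x u := by
  refine Relation.EqvGen.rel _ _ (Or.inl ⟨1, le_refl 1, [[x]], [[x, e]], rfl,
    ⟨by simp, fun l hl => ?_⟩,
    List.Forall₂.cons (Or.inr ⟨[x], [], 1, le_refl 1, by simp, by simp⟩) List.Forall₂.nil,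
    Or.inl ⟨?_, ?_⟩⟩)
  · rcases List.mem_cons.mp hl with rfl | hl
    · simp
    · exact absurd hl List.not_mem_nil
  · rw [S.SOP_singleton]; exact rfl
  · rw [S.SOP_pair_mul]; exact hu

/-- Quotient addition. -/
noncomputable def qadd (e : R) :
    Quotient (LamSetoid S e) → Quotient (LamSetoid S e) → Quotient (LamSetoid S e) :=
  Quotient.map₂ (fun x y => (S.add.op_nonempty x y).choose)
    (by
      intro x x' hx y y' hy
      obtain ⟨w, hw⟩ := S.add.op_nonempty x' y
      have h1 : Relation.EqvGen (S.Lam e) (S.add.op_nonempty x y).choose w :=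
        (S.eqvGen_compat e x x' hx y).2.1 _ (S.add.op_nonempty x y).choose_spec w hw
      have h2 : Relation.EqvGen (S.Lam e) w (S.add.op_nonempty x' y').choose :=
        (S.eqvGen_compat e y y' hy x').1 w hw _ (S.add.op_nonempty x' y').choose_spec
      exact h1.trans _ _ _ h2)

/-- Quotient multiplication. -/
noncomputable def qmul (e : R) :
    Quotient (LamSetoid S e) → Quotient (LamSetoid S e) → Quotient (LamSetoid S e) :=
  Quotient.map₂ (fun x y => (S.mul.op_nonempty x y).choose)
    (by
      intro x x' hx y y' hy
      obtain ⟨w, hw⟩ := S.mul.op_nonempty x' y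
      have h1 : Relation.EqvGen (S.Lam e) (S.mul.op_nonempty x y).choose w :=
        (S.eqvGen_compat e x x' hx y).2.2.2 _ (S.mul.op_nonempty x y).choose_spec w hw
      have h2 : Relation.EqvGen (S.Lam e) w (S.mul.op_nonempty x' y').choose :=
        (S.eqvGen_compat e y y' hy x').2.2.1 w hw _ (S.mul.op_nonempty x' y').choose_spec
      exact h1.trans _ _ _ h2)

theorem qadd_mk (e : R) (x y : R) : ∀ z ∈ S.add.op x y,
    S.qadd e (Quotient.mk (LamSetoid S e) x) (Quotient.mk (LamSetoid S e) y) =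
      Quotient.mk (LamSetoid S e) z := by
  intro z hz
  show Quotient.mk (LamSetoid S e) (S.add.op_nonempty x y).choose = _
  exact Quotient.sound (S.T_add (S.add.op_nonempty x y).choose_spec hz)

theorem qmul_mk (e : R) (x y : R) : ∀ z ∈ S.mul.op x y,
    S.qmul e (Quotient.mk (LamSetoid S e) x) (Quotient.mk (LamSetoid S e) y) =
      Quotient.mk (LamSetoid S e) z := by
  intro z hz
  show Quotient.mk (LamSetoid S e) (S.mul.op_nonempty x y).choose = _
  exact Quotient.sound (S.T_mul (S.mul.op_nonempty x y).choose_spec hz)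

end Hyperring


/-- `Λₑ*` is strongly regular on both operations and the quotient
`R/Λₑ*` is a commutative ring with identity the class of `e`. -/
theorem stmt19 {R : Type*} (S : Hyperring R) (e : R) :
    S.add.StronglyRegular (Relation.EqvGen (S.Lam e)) ∧
    S.mul.StronglyRegular (Relation.EqvGen (S.Lam e)) ∧
    ∃ padd pmul : Quotient (LamSetoid S e) → Quotient (LamSetoid S e) → Quotient (LamSetoid S e),
      (∀ x y : R, ∀ z ∈ S.add.op x y,
        padd (Quotient.mk _ x) (Quotient.mk _ y) = Quotient.mk (LamSetoid S e) z) ∧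
      (∀ x y : R, ∀ z ∈ S.mul.op x y,
        pmul (Quotient.mk _ x) (Quotient.mk _ y) = Quotient.mk (LamSetoid S e) z) ∧
      (∀ a b c, padd (padd a b) c = padd a (padd b c)) ∧
      (∀ a b, padd a b = padd b a) ∧
      (∃ zero, (∀ a, padd zero a = a ∧ padd a zero = a) ∧
        ∀ a, ∃ b, padd a b = zero ∧ padd b a = zero) ∧
      (∀ a b c, pmul (pmul a b) c = pmul a (pmul b c)) ∧
      (∀ a b, pmul a b = pmul b a) ∧
      (∀ a b c, pmul a (padd b c) = padd (pmul a b) (pmul a c)) ∧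
      (∀ a b c, pmul (padd a b) c = padd (pmul a c) (pmul b c)) ∧
      (∀ a, pmul (Quotient.mk (LamSetoid S e) e) a = a ∧
            pmul a (Quotient.mk (LamSetoid S e) e) = a) := by
  have compat := S.eqvGen_compat e
  have hassoc : ∀ a b c, S.qadd e (S.qadd e a b) c = S.qadd e a (S.qadd e b c) := by
    intro a b c
    obtain ⟨x, rfl⟩ := Quotient.exists_rep a
    obtain ⟨y, rfl⟩ := Quotient.exists_rep b
    obtain ⟨z, rfl⟩ := Quotient.exists_rep c
    obtain ⟨u, hu⟩ := S.add.op_nonempty x y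
    obtain ⟨w, hw⟩ := S.add.op_nonempty u z
    have hw' : w ∈ S.add.sop (S.add.op x y) {z} := S.add.mem_sop.mpr ⟨u, hu, z, rfl, hw⟩
    rw [S.add_assoc x y z] at hw'
    obtain ⟨x', hx', t, ht, hwt⟩ := S.add.mem_sop.mp hw'
    rw [show x' = x from hx'] at hwt
    rw [S.qadd_mk e x y u hu, S.qadd_mk e u z w hw, S.qadd_mk e y z t ht,
      S.qadd_mk e x t w hwt]
  have hcomm : ∀ a b, S.qadd e a b = S.qadd e b a := by
    intro a b
    obtain ⟨x, rfl⟩ := Quotient.exists_rep a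
    obtain ⟨y, rfl⟩ := Quotient.exists_rep b
    obtain ⟨u, hu⟩ := S.add.op_nonempty x y
    obtain ⟨v, hv⟩ := S.add.op_nonempty y x
    rw [S.qadd_mk e x y u hu, S.qadd_mk e y x v hv]
    exact Quotient.sound (S.T_add_comm hu hv)
  have hdiv : ∀ a b, ∃ u, S.qadd e a u = b := by
    intro a b
    obtain ⟨x, rfl⟩ := Quotient.exists_rep a
    obtain ⟨y, rfl⟩ := Quotient.exists_rep b
    obtain ⟨u, hu⟩ := (S.add_repro x y).1
    exact ⟨Quotient.mk _ u, S.qadd_mk e x u y hu⟩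
  obtain ⟨z0, hz0⟩ := hdiv (Quotient.mk (LamSetoid S e) e) (Quotient.mk (LamSetoid S e) e)
  have hzero : ∀ b, S.qadd e b z0 = b := by
    intro b
    obtain ⟨w, hw⟩ := hdiv (Quotient.mk (LamSetoid S e) e) b
    calc S.qadd e b z0 = S.qadd e (S.qadd e (Quotient.mk (LamSetoid S e) e) w) z0 := by rw [hw]
      _ = S.qadd e (S.qadd e (Quotient.mk (LamSetoid S e) e) z0) w := by
          rw [hassoc, hassoc, hcomm w z0]
      _ = S.qadd e (Quotient.mk (LamSetoid S e) e) w := by rw [hz0]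
      _ = b := hw
  have hmassoc : ∀ a b c, S.qmul e (S.qmul e a b) c = S.qmul e a (S.qmul e b c) := by
    intro a b c
    obtain ⟨x, rfl⟩ := Quotient.exists_rep a
    obtain ⟨y, rfl⟩ := Quotient.exists_rep b
    obtain ⟨z, rfl⟩ := Quotient.exists_rep c
    obtain ⟨u, hu⟩ := S.mul.op_nonempty x y
    obtain ⟨w, hw⟩ := S.mul.op_nonempty u z
    have hw' : w ∈ S.mul.sop (S.mul.op x y) {z} := S.mul.mem_sop.mpr ⟨u, hu, z, rfl, hw⟩
    rw [S.mul_assoc x y z] at hw'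
    obtain ⟨x', hx', t, ht, hwt⟩ := S.mul.mem_sop.mp hw'
    rw [show x' = x from hx'] at hwt
    rw [S.qmul_mk e x y u hu, S.qmul_mk e u z w hw, S.qmul_mk e y z t ht,
      S.qmul_mk e x t w hwt]
  have hmcomm : ∀ a b, S.qmul e a b = S.qmul e b a := by
    intro a b
    obtain ⟨x, rfl⟩ := Quotient.exists_rep a
    obtain ⟨y, rfl⟩ := Quotient.exists_rep b
    obtain ⟨u, hu⟩ := S.mul.op_nonempty x y
    obtain ⟨v, hv⟩ := S.mul.op_nonempty y x
    rw [S.qmul_mk e x y u hu, S.qmul_mk e y x v hv]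
    exact Quotient.sound (S.T_mul_comm hu hv)
  have hldist : ∀ a b c, S.qmul e a (S.qadd e b c) = S.qadd e (S.qmul e a b) (S.qmul e a c) := by
    intro a b c
    obtain ⟨x, rfl⟩ := Quotient.exists_rep a
    obtain ⟨y, rfl⟩ := Quotient.exists_rep b
    obtain ⟨z, rfl⟩ := Quotient.exists_rep c
    obtain ⟨u, hu⟩ := S.add.op_nonempty y z
    obtain ⟨v, hv⟩ := S.mul.op_nonempty x u
    have hv' : v ∈ S.mul.sop {x} (S.add.op y z) := S.mul.mem_sop.mpr ⟨x, rfl, u, hu, hv⟩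
    rw [S.left_distrib x y z] at hv'
    obtain ⟨p, hp, q, hq, hvpq⟩ := S.add.mem_sop.mp hv'
    rw [S.qadd_mk e y z u hu, S.qmul_mk e x u v hv, S.qmul_mk e x y p hp,
      S.qmul_mk e x z q hq, S.qadd_mk e p q v hvpq]
  have hrdist : ∀ a b c, S.qmul e (S.qadd e a b) c = S.qadd e (S.qmul e a c) (S.qmul e b c) := by
    intro a b c
    obtain ⟨x, rfl⟩ := Quotient.exists_rep a
    obtain ⟨y, rfl⟩ := Quotient.exists_rep b
    obtain ⟨z, rfl⟩ := Quotient.exists_rep c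
    obtain ⟨u, hu⟩ := S.add.op_nonempty x y
    obtain ⟨v, hv⟩ := S.mul.op_nonempty u z
    have hv' : v ∈ S.mul.sop (S.add.op x y) {z} := S.mul.mem_sop.mpr ⟨u, hu, z, rfl, hv⟩
    rw [S.right_distrib z x y] at hv'
    obtain ⟨p, hp, q, hq, hvpq⟩ := S.add.mem_sop.mp hv'
    rw [S.qadd_mk e x y u hu, S.qmul_mk e u z v hv, S.qmul_mk e x z p hp,
      S.qmul_mk e y z q hq, S.qadd_mk e p q v hvpq]
  have hone : ∀ a, S.qmul e (Quotient.mk (LamSetoid S e) e) a = a ∧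
      S.qmul e a (Quotient.mk (LamSetoid S e) e) = a := by
    intro a
    obtain ⟨x, rfl⟩ := Quotient.exists_rep a
    obtain ⟨u, hu⟩ := S.mul.op_nonempty e x
    obtain ⟨w, hw⟩ := S.mul.op_nonempty x e
    constructor
    · rw [S.qmul_mk e e x u hu]
      exact (Quotient.sound (S.T_one_left hu)).symm
    · rw [S.qmul_mk e x e w hw]
      exact (Quotient.sound (S.T_one_right hw)).symm
  refine ⟨fun x y h a => ⟨(compat x y h a).1, (compat x y h a).2.1⟩,
    fun x y h a => ⟨(compat x y h a).2.2.1, (compat x y h a).2.2.2⟩,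
    S.qadd e, S.qmul e, S.qadd_mk e, S.qmul_mk e, hassoc, hcomm,
    ⟨z0, fun a => ⟨by rw [hcomm]; exact hzero a, hzero a⟩, fun a => ?_⟩,
    hmassoc, hmcomm, hldist, hrdist, hone⟩
  obtain ⟨b, hb⟩ := hdiv a z0
  exact ⟨b, hb, by rw [hcomm]; exact hb⟩
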